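/- The quadratic growth bound |S_φ(ψ)| ≤ c₇|ψ|² holds for all φ, ψ ∈ ℝ², where S_φ(ψ) = T(φ+ψ) − T(φ) − DT(φ)ψ and c₇ is a constant with 4|ν̂'(s)| + |ν̂''(s)|s ≤ c₇ for all s ≥ 0. -/

import Mathlib

noncomputable section

/-- `T(W) = ν̂(|W|)W` on `ℝ²`. -/
def Tmap (ν : ℝ → ℝ) (W : EuclideanSpace ℝ (Fin 2)) : EuclideanSpace ℝ (Fin 2) :=
  ν ‖W‖ • W

/-- `S_φ(ψ) = T(φ+ψ) − T(φ) − DT(φ)ψ`. -/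
def Smap (ν : ℝ → ℝ) (φ ψ : EuclideanSpace ℝ (Fin 2)) : EuclideanSpace ℝ (Fin 2) :=
  Tmap ν (φ + ψ) - Tmap ν φ - fderiv ℝ (Tmap ν) φ ψ

open Real Filter Asymptotics Set
open scoped RealInnerProductSpace Topology

local notation "E2" => EuclideanSpace ℝ (Fin 2)

def Aclm (ν : ℝ → ℝ) (x : E2) : E2 →L[ℝ] E2 :=
  ν ‖x‖ • ContinuousLinearMap.id ℝ E2 +
    (deriv ν ‖x‖ / ‖x‖) • (innerSL ℝ x).smulRight x

lemma Aclm_apply (ν : ℝ → ℝ) (x ψ : E2) :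
    Aclm ν x ψ = ν ‖x‖ • ψ + (deriv ν ‖x‖ / ‖x‖ * ⟪x, ψ⟫) • x := by
  simp [Aclm, ContinuousLinearMap.smulRight_apply, smul_smul]

lemma hasFDerivAt_norm2 {x : E2} (hx : x ≠ 0) :
    HasFDerivAt (fun y : E2 => ‖y‖) (‖x‖⁻¹ • innerSL ℝ x) x := by
  have hr : ‖x‖ ≠ 0 := norm_ne_zero_iff.2 hx
  have h2 : ‖x‖ ^ 2 ≠ 0 := pow_ne_zero 2 hr
  have h1 : HasFDerivAt (fun y : E2 => ‖y‖ ^ 2) (2 • (innerSL ℝ x)) x :=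
    (hasStrictFDerivAt_norm_sq x).hasFDerivAt
  have h3 := h1.sqrt h2
  have hfun : (fun y : E2 => Real.sqrt (‖y‖ ^ 2)) = fun y : E2 => ‖y‖ := by
    funext y; rw [Real.sqrt_sq (norm_nonneg y)]
  rw [hfun] at h3
  refine h3.congr_fderiv ?_
  rw [Real.sqrt_sq (norm_nonneg x)]
  ext ψ
  simp only [ContinuousLinearMap.smul_apply, innerSL_apply_apply, smul_eq_mul,
    ContinuousLinearMap.coe_smul', Pi.smul_apply]
  field_simp
  ring

lemma hasFDerivAt_Tmap (ν : ℝ → ℝ) (hC3 : ContDiff ℝ 3 ν) (x : E2) :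
    HasFDerivAt (Tmap ν) (Aclm ν x) x := by
  have hdν : Differentiable ℝ ν := hC3.differentiable (by norm_num)
  rcases eq_or_ne x 0 with rfl | hx
  · -- derivative at 0 is ν 0 • id
    have hA : Aclm ν (0:E2) = ν 0 • ContinuousLinearMap.id ℝ E2 := by
      ext ψ; simp [Aclm_apply]
    rw [hA, hasFDerivAt_iff_isLittleO_nhds_zero]
    have hexpr : (fun h : E2 => Tmap ν (0 + h) - Tmap ν 0 -
        (ν 0 • ContinuousLinearMap.id ℝ E2) h) = fun h : E2 => (ν ‖h‖ - ν 0) • h := by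
      funext h; simp [Tmap, sub_smul]
    rw [hexpr, isLittleO_iff]
    intro ε hε
    have hcont : Filter.Tendsto (fun h : E2 => |ν ‖h‖ - ν 0|) (𝓝 0) (𝓝 0) := by
      have : Filter.Tendsto (fun h : E2 => ν ‖h‖ - ν 0) (𝓝 0) (𝓝 (ν ‖(0:E2)‖ - ν 0)) :=
        ((hC3.continuous.comp continuous_norm).sub continuous_const).continuousAt
      simpa using this.abs
    filter_upwards [hcont.eventually (gt_mem_nhds hε)] with h hh
    rw [norm_smul]
    exact mul_le_mul_of_nonneg_right (le_of_lt (by simpa using hh)) (norm_nonneg h)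
  · have hr : ‖x‖ ≠ 0 := norm_ne_zero_iff.2 hx
    have hν : HasDerivAt ν (deriv ν ‖x‖) ‖x‖ := (hdν ‖x‖).hasDerivAt
    have hc : HasFDerivAt (fun y : E2 => ν ‖y‖)
        (deriv ν ‖x‖ • (‖x‖⁻¹ • innerSL ℝ x)) x :=
      hν.comp_hasFDerivAt x (hasFDerivAt_norm2 hx)
    have h := hc.smul (hasFDerivAt_id x)
    have : HasFDerivAt (Tmap ν)
        (ν ‖x‖ • ContinuousLinearMap.id ℝ E2 +
          (deriv ν ‖x‖ • (‖x‖⁻¹ • innerSL ℝ x)).smulRight x) x := h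
    convert this using 1
    ext ψ
    rw [Aclm_apply, div_eq_mul_inv, mul_assoc]
    simp [ContinuousLinearMap.smulRight_apply]

lemma deriv_nu_bound (ν : ℝ → ℝ) (ctil : ℝ) (hC3 : ContDiff ℝ 3 ν)
    (hb : ∀ s > (0:ℝ), |deriv ν s| / s ≤ ctil) :
    ∀ s : ℝ, 0 ≤ s → |deriv ν s| ≤ ctil * s := by
  have hd : Continuous (deriv ν) := by
    have := (hC3.iterate_deriv' 2 1).continuous
    simpa using this
  intro s hs
  rcases eq_or_lt_of_le hs with rfl | hs'
  · -- s = 0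
    have h1 : Filter.Tendsto (fun t : ℝ => |deriv ν t|) (𝓝[>] (0:ℝ)) (𝓝 |deriv ν 0|) :=
      (hd.abs.continuousAt.tendsto).mono_left nhdsWithin_le_nhds
    have h2 : Filter.Tendsto (fun t : ℝ => ctil * t) (𝓝[>] (0:ℝ)) (𝓝 (ctil * 0)) :=
      ((continuous_const.mul continuous_id).continuousAt.tendsto).mono_left nhdsWithin_le_nhds
    have h3 : |deriv ν 0| ≤ ctil * 0 := by
      refine le_of_tendsto_of_tendsto h1 h2 (eventually_mem_nhdsWithin.mono ?_)
      intro t ht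
      have ht' : (0:ℝ) < t := ht
      have := hb t ht'
      calc |deriv ν t| = |deriv ν t| / t * t := by field_simp
        _ ≤ ctil * t := mul_le_mul_of_nonneg_right this ht'.le
    simpa using h3
  · have := hb s hs'
    calc |deriv ν s| = |deriv ν s| / s * s := by field_simp
      _ ≤ ctil * s := mul_le_mul_of_nonneg_right this hs'.le

lemma ctil_nonneg (ν : ℝ → ℝ) (ctil : ℝ)
    (hb : ∀ s > (0:ℝ), |deriv ν s| / s ≤ ctil) : 0 ≤ ctil :=
  le_trans (by positivity) (hb 1 one_pos)

lemma nu_diff_bound (ν : ℝ → ℝ) (ctil : ℝ) (hC3 : ContDiff ℝ 3 ν)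
    (hb : ∀ s > (0:ℝ), |deriv ν s| / s ≤ ctil) :
    ∀ s : ℝ, 0 ≤ s → |ν s - ν 0| ≤ ctil * s * s := by
  intro s hs
  have hset : ∀ y ∈ Set.Ico (0:ℝ) s, ‖derivWithin ν (Set.Icc 0 s) y‖ ≤ ctil * s := by
    intro y hy
    have hdw : derivWithin ν (Set.Icc 0 s) y = deriv ν y := by
      apply DifferentiableAt.derivWithin ((hC3.differentiable (by norm_num)) y)
      exact uniqueDiffOn_Icc (lt_of_le_of_lt hy.1 hy.2) y (Set.mem_Icc.2 ⟨hy.1, hy.2.le⟩)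
    rw [hdw, Real.norm_eq_abs]
    calc |deriv ν y| ≤ ctil * y := deriv_nu_bound ν ctil hC3 hb y hy.1
      _ ≤ ctil * s := mul_le_mul_of_nonneg_left hy.2.le (ctil_nonneg ν ctil hb)
  have := norm_image_sub_le_of_norm_deriv_le_segment
    ((hC3.differentiable (by norm_num)).differentiableOn) hset s (Set.right_mem_Icc.2 hs)
  simpa [Real.norm_eq_abs, mul_comm] using this

set_option maxHeartbeats 1000000 in
lemma G_deriv (ν : ℝ → ℝ) (ctil c₇ : ℝ) (hC3 : ContDiff ℝ 3 ν)
    (hb : ∀ s > (0:ℝ), |deriv ν s| / s ≤ ctil)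
    (h7 : ∀ s ≥ (0:ℝ), 4 * |deriv ν s| + |deriv (deriv ν) s| * s ≤ c₇)
    (φ ψ : E2) (u : ℝ) :
    ∃ D : E2, HasDerivAt (fun t : ℝ => Aclm ν (φ + t • ψ) ψ) D u ∧ ‖D‖ ≤ c₇ * ‖ψ‖ ^ 2 := by
  have hct : 0 ≤ ctil := ctil_nonneg ν ctil hb
  have hc₇ : 0 ≤ c₇ := le_trans (by positivity) (h7 0 le_rfl)
  have hline : HasDerivAt (fun t : ℝ => φ + t • ψ) ψ u := by
    simpa using ((hasDerivAt_id u).smul_const ψ).const_add φ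
  have hGfun : (fun t : ℝ => Aclm ν (φ + t • ψ) ψ) = fun t : ℝ =>
      ν ‖φ + t • ψ‖ • ψ +
        (deriv ν ‖φ + t • ψ‖ / ‖φ + t • ψ‖ * ⟪φ + t • ψ, ψ⟫) • (φ + t • ψ) :=
    funext fun t => Aclm_apply ν _ ψ
  rcases eq_or_ne (φ + u • ψ) 0 with hx0 | hx
  · -- the segment passes through the origin at `u`; derivative is `0`
    refine ⟨0, ?_, by simpa using mul_nonneg hc₇ (by positivity)⟩
    have hxt : ∀ t : ℝ, φ + t • ψ = (t - u) • ψ := by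
      intro t
      rw [eq_neg_of_add_eq_zero_left hx0, sub_smul]
      abel
    set K := 2 * ctil * ‖ψ‖ ^ 3 with hK
    have hKnn : 0 ≤ K := by positivity
    have key : ∀ t : ℝ, ‖Aclm ν (φ + t • ψ) ψ - Aclm ν (φ + u • ψ) ψ‖ ≤ K * (t - u) ^ 2 := by
      intro t
      have hGu : Aclm ν (φ + u • ψ) ψ = ν 0 • ψ := by
        rw [hx0, Aclm_apply]; simp
      rw [hGu, Aclm_apply, hxt t]
      set z : E2 := (t - u) • ψ with hz
      have hsz : ‖z‖ = |t - u| * ‖ψ‖ := by rw [hz, norm_smul, Real.norm_eq_abs]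
      rcases eq_or_ne z 0 with hz0 | hz0
      · rw [hz0]; simp [norm_zero]
        positivity
      · have hszpos : (0:ℝ) < ‖z‖ := norm_pos_iff.2 hz0
        have h1 : ‖(ν ‖z‖ - ν 0) • ψ‖ ≤ ctil * ‖z‖ ^ 2 * ‖ψ‖ := by
          rw [norm_smul, Real.norm_eq_abs]
          have := nu_diff_bound ν ctil hC3 hb ‖z‖ (norm_nonneg z)
          have h2 : |ν ‖z‖ - ν 0| ≤ ctil * ‖z‖ ^ 2 := by nlinarith
          exact mul_le_mul_of_nonneg_right h2 (norm_nonneg ψ)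
        have h2 : ‖(deriv ν ‖z‖ / ‖z‖ * ⟪z, ψ⟫) • z‖ ≤ ctil * ‖z‖ ^ 2 * ‖ψ‖ := by
          rw [norm_smul, Real.norm_eq_abs, abs_mul, abs_div, abs_norm]
          have hdz : |deriv ν ‖z‖| ≤ ctil * ‖z‖ := deriv_nu_bound ν ctil hC3 hb ‖z‖ (norm_nonneg z)
          have hiz : |⟪z, ψ⟫| ≤ ‖z‖ * ‖ψ‖ := abs_real_inner_le_norm z ψ
          have hq : |deriv ν ‖z‖| / ‖z‖ ≤ ctil := by
            rw [div_le_iff₀ hszpos]; nlinarith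
          calc |deriv ν ‖z‖| / ‖z‖ * |⟪z, ψ⟫| * ‖z‖
              ≤ ctil * (‖z‖ * ‖ψ‖) * ‖z‖ := by
                apply mul_le_mul_of_nonneg_right _ (norm_nonneg z)
                exact mul_le_mul hq hiz (abs_nonneg _) hct
            _ = ctil * ‖z‖ ^ 2 * ‖ψ‖ := by ring
        have hre : ν ‖z‖ • ψ + (deriv ν ‖z‖ / ‖z‖ * ⟪z, ψ⟫) • z - ν 0 • ψ
            = (ν ‖z‖ - ν 0) • ψ + (deriv ν ‖z‖ / ‖z‖ * ⟪z, ψ⟫) • z := by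
          rw [sub_smul]; abel
        rw [hre]
        calc ‖(ν ‖z‖ - ν 0) • ψ + (deriv ν ‖z‖ / ‖z‖ * ⟪z, ψ⟫) • z‖
            ≤ ‖(ν ‖z‖ - ν 0) • ψ‖ + ‖(deriv ν ‖z‖ / ‖z‖ * ⟪z, ψ⟫) • z‖ := norm_add_le _ _
          _ ≤ ctil * ‖z‖ ^ 2 * ‖ψ‖ + ctil * ‖z‖ ^ 2 * ‖ψ‖ := add_le_add h1 h2
          _ = K * (t - u) ^ 2 := by rw [hK, hsz, mul_pow, sq_abs]; ring
      -- remaining: goal was stated on the unfolded form; `key` handles it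
    rw [hasDerivAt_iff_isLittleO, isLittleO_iff]
    intro ε hε
    have hKe : (0:ℝ) < ε / (K + 1) := by positivity
    filter_upwards [Metric.ball_mem_nhds u hKe] with t ht
    have htu : |t - u| < ε / (K + 1) := by
      rw [Metric.mem_ball, Real.dist_eq] at ht; exact ht
    have h2 := key t
    have : ‖Aclm ν (φ + t • ψ) ψ - Aclm ν (φ + u • ψ) ψ - (t - u) • (0:E2)‖
        ≤ ε * ‖t - u‖ := by
      rw [smul_zero, sub_zero, Real.norm_eq_abs]
      calc ‖Aclm ν (φ + t • ψ) ψ - Aclm ν (φ + u • ψ) ψ‖ ≤ K * (t - u) ^ 2 := h2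
        _ = K * |t - u| * |t - u| := by rw [← sq_abs (t-u)]; ring
        _ ≤ ε * |t - u| := by
            apply mul_le_mul_of_nonneg_right _ (abs_nonneg _)
            have h3 : K * |t - u| ≤ K * (ε / (K + 1)) :=
              mul_le_mul_of_nonneg_left htu.le hKnn
            have h4 : K * (ε / (K + 1)) ≤ ε := by
              rw [mul_div_assoc']
              rw [div_le_iff₀ (by positivity)]
              nlinarith
            linarith
    exact this
  · -- nonzero case
    set x : E2 := φ + u • ψ with hxdef
    have hr0 : (0:ℝ) < ‖x‖ := norm_pos_iff.2 hx
    have hrne : ‖x‖ ≠ 0 := hr0.ne'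
    have hdν : Differentiable ℝ ν := hC3.differentiable (by norm_num)
    have hdν' : Differentiable ℝ (deriv ν) := by
      have := (hC3.iterate_deriv' 2 1).differentiable (by norm_num)
      simpa using this
    have hr : HasDerivAt (fun t : ℝ => ‖φ + t • ψ‖) (‖x‖⁻¹ * ⟪x, ψ⟫) u := by
      have := (hasFDerivAt_norm2 hx).comp_hasDerivAt u hline
      simp at this; exact this
    have hp : HasDerivAt (fun t : ℝ => ⟪φ + t • ψ, ψ⟫) ⟪ψ, ψ⟫ u := by
      have := HasDerivAt.inner ℝ hline (hasDerivAt_const u ψ)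
      simpa using this
    have hν1 : HasDerivAt (fun t : ℝ => ν ‖φ + t • ψ‖)
        (deriv ν ‖x‖ * (‖x‖⁻¹ * ⟪x, ψ⟫)) u := ((hdν ‖x‖).hasDerivAt).comp u hr
    have hν2 : HasDerivAt (fun t : ℝ => deriv ν ‖φ + t • ψ‖)
        (deriv (deriv ν) ‖x‖ * (‖x‖⁻¹ * ⟪x, ψ⟫)) u := HasDerivAt.comp (h₂ := deriv ν) u ((hdν' ‖x‖).hasDerivAt) hr
    have hc : HasDerivAt (fun t : ℝ => deriv ν ‖φ + t • ψ‖ / ‖φ + t • ψ‖)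
        ((deriv (deriv ν) ‖x‖ * (‖x‖⁻¹ * ⟪x, ψ⟫) * ‖x‖ -
          deriv ν ‖x‖ * (‖x‖⁻¹ * ⟪x, ψ⟫)) / ‖x‖ ^ 2) u := hν2.div hr hrne
    have hd : HasDerivAt
        (fun t : ℝ => deriv ν ‖φ + t • ψ‖ / ‖φ + t • ψ‖ * ⟪φ + t • ψ, ψ⟫)
        ((deriv (deriv ν) ‖x‖ * (‖x‖⁻¹ * ⟪x, ψ⟫) * ‖x‖ -
          deriv ν ‖x‖ * (‖x‖⁻¹ * ⟪x, ψ⟫)) / ‖x‖ ^ 2 * ⟪x, ψ⟫ +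
          deriv ν ‖x‖ / ‖x‖ * ⟪ψ, ψ⟫) u := hc.mul hp
    have hG : HasDerivAt (fun t : ℝ => Aclm ν (φ + t • ψ) ψ)
        ((deriv ν ‖x‖ * (‖x‖⁻¹ * ⟪x, ψ⟫)) • ψ +
          ((deriv ν ‖x‖ / ‖x‖ * ⟪x, ψ⟫) • ψ +
            ((deriv (deriv ν) ‖x‖ * (‖x‖⁻¹ * ⟪x, ψ⟫) * ‖x‖ -
              deriv ν ‖x‖ * (‖x‖⁻¹ * ⟪x, ψ⟫)) / ‖x‖ ^ 2 * ⟪x, ψ⟫ +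
              deriv ν ‖x‖ / ‖x‖ * ⟪ψ, ψ⟫) • x)) u := by
      rw [hGfun]
      exact (hν1.smul_const ψ).add (hd.smul hline)
    refine ⟨_, hG, ?_⟩
    clear hline hGfun hp hr hν1 hν2 hc hd hG
    set r : ℝ := ‖x‖ with hrdef
    set m : ℝ := ‖ψ‖ with hmdef
    set A : ℝ := |deriv ν r| with hAdef
    set B : ℝ := |deriv (deriv ν) r| with hBdef
    set w : ℝ := r⁻¹ * ⟪x, ψ⟫ with hwdef
    clear_value x r m A B w
    have hwm : |w| ≤ m := by
      have h1 : |⟪x, ψ⟫| ≤ r * m := by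
        rw [hrdef, hmdef]; exact abs_real_inner_le_norm x ψ
      rw [hwdef, abs_mul, abs_inv, abs_of_pos hr0, inv_mul_le_iff₀ hr0]
      have h2 : m * r = r * m := mul_comm _ _
      linarith
    have hpw : ⟪x, ψ⟫ = r * w := by
      rw [hwdef, ← mul_assoc, mul_inv_cancel₀ hrne, one_mul]
    set e : E2 := r⁻¹ • x with hedef
    have he : ‖e‖ = 1 := by
      rw [hedef, hrdef]; exact norm_smul_inv_norm hx
    have hxe : x = r • e := by
      rw [hedef, smul_smul, mul_inv_cancel₀ hrne, one_smul]
    clear_value e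
    have hDeq : (deriv ν r * w) • ψ +
          ((deriv ν r / r * ⟪x, ψ⟫) • ψ +
            ((deriv (deriv ν) r * w * r - deriv ν r * w) / r ^ 2 * ⟪x, ψ⟫ +
              deriv ν r / r * ⟪ψ, ψ⟫) • x)
        = (2 * (deriv ν r * w)) • ψ +
          (((deriv (deriv ν) r * r - deriv ν r) * w ^ 2 + deriv ν r * m ^ 2) * r⁻¹) • x := by
      rw [real_inner_self_eq_norm_sq ψ, ← hmdef, hpw]
      have e1 : deriv ν r / r * (r * w) = deriv ν r * w := by
        field_simp
      have e2 : (deriv (deriv ν) r * w * r - deriv ν r * w) / r ^ 2 * (r * w) +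
          deriv ν r / r * m ^ 2
          = ((deriv (deriv ν) r * r - deriv ν r) * w ^ 2 + deriv ν r * m ^ 2) * r⁻¹ := by
        field_simp
      rw [e1, e2, two_mul, add_smul, add_assoc]
    have hDe2 : (((deriv (deriv ν) r * r - deriv ν r) * w ^ 2 + deriv ν r * m ^ 2) * r⁻¹) • x
        = ((deriv (deriv ν) r * r - deriv ν r) * w ^ 2 + deriv ν r * m ^ 2) • e := by
      conv_lhs => rw [hxe]
      rw [smul_smul, mul_assoc, inv_mul_cancel₀ hrne, mul_one]
    rw [hDeq, hDe2]
    have h7x : 4 * A + B * r ≤ c₇ := by rw [hAdef, hBdef]; exact h7 r hr0.le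
    have hAnn : 0 ≤ A := hAdef ▸ abs_nonneg _
    have hBnn : 0 ≤ B := hBdef ▸ abs_nonneg _
    have hmnn : 0 ≤ m := hmdef ▸ norm_nonneg ψ
    have bound1 : |2 * (deriv ν r * w)| ≤ 2 * (A * m) := by
      rw [abs_mul, abs_mul]
      simp only [abs_two]
      have : |deriv ν r| * |w| ≤ A * m := by
        rw [hAdef]
        exact mul_le_mul_of_nonneg_left hwm (abs_nonneg _)
      linarith
    have bound2 : |(deriv (deriv ν) r * r - deriv ν r) * w ^ 2 + deriv ν r * m ^ 2|
        ≤ (B * r + A) * m ^ 2 + A * m ^ 2 := by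
      have hw2 : w ^ 2 ≤ m ^ 2 := by
        rw [← sq_abs w]
        exact pow_le_pow_left₀ (abs_nonneg w) hwm 2
      have h1 : |(deriv (deriv ν) r * r - deriv ν r) * w ^ 2| ≤ (B * r + A) * m ^ 2 := by
        rw [abs_mul, abs_pow, sq_abs]
        have hs : |deriv (deriv ν) r * r - deriv ν r| ≤ B * r + A := by
          calc |deriv (deriv ν) r * r - deriv ν r|
              ≤ |deriv (deriv ν) r * r| + |deriv ν r| := abs_sub _ _
            _ = B * r + A := by rw [hAdef, hBdef, abs_mul, abs_of_pos hr0]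
        have hw2nn : (0:ℝ) ≤ w ^ 2 := sq_nonneg w
        calc |deriv (deriv ν) r * r - deriv ν r| * w ^ 2
            ≤ (B * r + A) * w ^ 2 := mul_le_mul_of_nonneg_right hs hw2nn
          _ ≤ (B * r + A) * m ^ 2 := by
              apply mul_le_mul_of_nonneg_left hw2
              positivity
      have h2 : |deriv ν r * m ^ 2| = A * m ^ 2 := by
        rw [hAdef, abs_mul, abs_pow, sq_abs]
      calc |(deriv (deriv ν) r * r - deriv ν r) * w ^ 2 + deriv ν r * m ^ 2|
          ≤ |(deriv (deriv ν) r * r - deriv ν r) * w ^ 2| + |deriv ν r * m ^ 2| :=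
            abs_add_le _ _
        _ ≤ (B * r + A) * m ^ 2 + A * m ^ 2 := by rw [h2]; exact add_le_add h1 le_rfl
    calc ‖(2 * (deriv ν r * w)) • ψ +
          ((deriv (deriv ν) r * r - deriv ν r) * w ^ 2 + deriv ν r * m ^ 2) • e‖
        ≤ ‖(2 * (deriv ν r * w)) • ψ‖ +
          ‖((deriv (deriv ν) r * r - deriv ν r) * w ^ 2 + deriv ν r * m ^ 2) • e‖ :=
          norm_add_le _ _
      _ = |2 * (deriv ν r * w)| * m +
          |(deriv (deriv ν) r * r - deriv ν r) * w ^ 2 + deriv ν r * m ^ 2| * 1 := by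
          rw [norm_smul, norm_smul, Real.norm_eq_abs, Real.norm_eq_abs, he, ← hmdef]
      _ ≤ 2 * (A * m) * m + ((B * r + A) * m ^ 2 + A * m ^ 2) * 1 := by
          apply add_le_add
          · exact mul_le_mul_of_nonneg_right bound1 hmnn
          · exact mul_le_mul_of_nonneg_right bound2 zero_le_one
      _ ≤ c₇ * m ^ 2 := by nlinarith [sq_nonneg m]

theorem S_quadratic_growth_aux (ν : ℝ → ℝ) (ctil c₇ : ℝ)
    (hC3 : ContDiff ℝ 3 ν)
    (hb : ∀ s > (0:ℝ), |deriv ν s| / s ≤ ctil)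
    (h7 : ∀ s ≥ (0:ℝ), 4 * |deriv ν s| + |deriv (deriv ν) s| * s ≤ c₇) :
    ∀ φ ψ : EuclideanSpace ℝ (Fin 2),
      ‖Tmap ν (φ + ψ) - Tmap ν φ - fderiv ℝ (Tmap ν) φ ψ‖ ≤ c₇ * ‖ψ‖ ^ 2 := by
  intro φ ψ
  have hc₇ : 0 ≤ c₇ := le_trans (by positivity) (h7 0 le_rfl)
  have hT : ∀ x : E2, HasFDerivAt (Tmap ν) (Aclm ν x) x := hasFDerivAt_Tmap ν hC3
  have hfd : fderiv ℝ (Tmap ν) φ = Aclm ν φ := (hT φ).fderiv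
  set G : ℝ → E2 := fun t => Aclm ν (φ + t • ψ) ψ with hGdef
  choose Gd hGd hGdb using fun u : ℝ => G_deriv ν ctil c₇ hC3 hb h7 φ ψ u
  have step1 : ∀ t ∈ Set.Icc (0:ℝ) 1, ‖G t - G 0‖ ≤ c₇ * ‖ψ‖ ^ 2 * t := by
    have := norm_image_sub_le_of_norm_deriv_le_segment'
      (f := G) (f' := Gd) (a := 0) (b := 1)
      (fun t _ => (hGd t).hasDerivWithinAt) (fun t _ => hGdb t)
    intro t ht
    simpa using this t ht
  have hline : ∀ t : ℝ, HasDerivAt (fun s : ℝ => φ + s • ψ) ψ t := fun t => by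
    simpa using ((hasDerivAt_id t).smul_const ψ).const_add φ
  have hF : ∀ t : ℝ, HasDerivAt (fun s : ℝ => Tmap ν (φ + s • ψ) - s • G 0)
      (G t - G 0) t := by
    intro t
    have h1 : HasDerivAt (fun s : ℝ => Tmap ν (φ + s • ψ)) (G t) t :=
      by have := (hT (φ + t • ψ)).comp_hasDerivAt t (hline t); exact this
    have h2 : HasDerivAt (fun s : ℝ => s • G 0) (G 0) t := by
      simpa using (hasDerivAt_id t).smul_const (G 0)
    exact h1.sub h2
  have step2 := norm_image_sub_le_of_norm_deriv_le_segment_01'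
    (f := fun s : ℝ => Tmap ν (φ + s • ψ) - s • G 0) (f' := fun t => G t - G 0)
    (fun t _ => (hF t).hasDerivWithinAt)
    (fun t ht => by
      calc ‖G t - G 0‖ ≤ c₇ * ‖ψ‖ ^ 2 * t := step1 t ⟨ht.1, ht.2.le⟩
        _ ≤ c₇ * ‖ψ‖ ^ 2 * 1 := mul_le_mul_of_nonneg_left ht.2.le (by positivity)
        _ = c₇ * ‖ψ‖ ^ 2 := mul_one _)
  have hG0 : G 0 = Aclm ν φ ψ := by rw [hGdef]; simp
  have heq : Tmap ν (φ + ψ) - Tmap ν φ - Aclm ν φ ψ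
      = (Tmap ν (φ + (1:ℝ) • ψ) - (1:ℝ) • G 0) -
        (Tmap ν (φ + (0:ℝ) • ψ) - (0:ℝ) • G 0) := by
    rw [hG0]
    simp only [one_smul, zero_smul, add_zero, sub_zero]
    abel
  rw [hfd, heq]
  exact step2

/-- quadratic growth bound `|S_φ(ψ)| ≤ c₇|ψ|²`. -/
theorem S_quadratic_growth (ν : ℝ → ℝ) (ctil c₇ : ℝ)
    (hC3 : ContDiff ℝ 3 ν)
    (hb : ∀ s > (0:ℝ), |deriv ν s| / s ≤ ctil)
    (h7 : ∀ s ≥ (0:ℝ), 4 * |deriv ν s| + |deriv (deriv ν) s| * s ≤ c₇) :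
    ∀ φ ψ : EuclideanSpace ℝ (Fin 2), ‖Smap ν φ ψ‖ ≤ c₇ * ‖ψ‖ ^ 2 := by
  intro φ ψ
  unfold Smap
  exact S_quadratic_growth_aux ν ctil c₇ hC3 hb h7 φ ψ

end
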